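/- Let a > 0. For all nonnegative integers m and n, ∑_{x=0}^∞ (e^{-a} a^x / x!) C_m^{(a)}(x) C_n^{(a)}(x) = (a^n / n!) δ_{mn}, where δ_{mn} is the Kronecker delta and the series (a sum over the nonnegative integers x) converges absolutely. -/

import Mathlib

/-- Generalized binomial coefficient `x(x-1)⋯(x-k+1)/k!`. -/
noncomputable def genChoose (x : ℝ) (k : ℕ) : ℝ :=
  (∏ j ∈ Finset.range k, (x - (j : ℝ))) / (Nat.factorial k : ℝ)

/-- The Charlier polynomial `C_n^{(a)}(x) = ∑_{k=0}^n (x choose k) (-a)^{n-k}/(n-k)!`. -/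
noncomputable def charlier (a : ℝ) (n : ℕ) (x : ℝ) : ℝ :=
  ∑ k ∈ Finset.range (n + 1),
    genChoose x k * (-a) ^ (n - k) / (Nat.factorial (n - k) : ℝ)

/-- Charlier polynomial with integer index, with the convention `C_{-1}^{(a)} ≡ 0`. -/
noncomputable def charlierZ (a : ℝ) (n : ℤ) (x : ℝ) : ℝ :=
  if 0 ≤ n then charlier a n.toNat x else 0

/-- Forward difference operator `Δf(x) = f(x+1) - f(x)`. -/
def fdiff (f : ℝ → ℝ) : ℝ → ℝ := fun x => f (x + 1) - f x

/-- Backward difference operator `∇f(x) = f(x) - f(x-1)`. -/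
def bdiff (f : ℝ → ℝ) : ℝ → ℝ := fun x => f x - f (x - 1)

/-- The generalized Charlier polynomial
`C_n^{a,N}(x) = [1 + N(-1)^n C_n^{(a)}(-1)] C_n^{(a)}(x) - N(-1)^n C_n^{(a)}(0) C_n^{(a)}(x-1)`. -/
noncomputable def genCharlier (a N : ℝ) (n : ℕ) (x : ℝ) : ℝ :=
  (1 + N * (-1) ^ n * charlier a n (-1)) * charlier a n x
    - N * (-1) ^ n * charlier a n 0 * charlier a n (x - 1)

/-- The coefficient `A_i(x)` (for `i ≥ 1`) of the difference equation. -/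
noncomputable def Acoef (a : ℝ) (i : ℕ) (x : ℝ) : ℝ :=
  ∑ k ∈ Finset.Icc 1 i, (-1 : ℝ) ^ k * charlier (-a) (i - k) (-x + 1) *
    (charlier a k (-1) * charlier a k (x - 2) - charlier a k (-2) * charlier a k (x - 1))

/-- The coefficient `A_0 = (-1)^{n-1} C_{n-1}^{(a)}(-2)` (with `C_{-1}^{(a)} ≡ 0`). -/
noncomputable def A0coef (a : ℝ) (n : ℕ) : ℝ :=
  (-1 : ℝ) ^ ((n : ℤ) - 1) * charlierZ a ((n : ℤ) - 1) (-2)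


open Finset Nat

private lemma prod_range_sub_cast (x k : ℕ) :
    ∏ j ∈ Finset.range k, ((x : ℝ) - (j : ℝ)) = (x.descFactorial k : ℝ) := by
  induction k with
  | zero => simp
  | succ k ih =>
    rw [Finset.prod_range_succ, ih, Nat.descFactorial_succ]
    rcases le_or_gt (k + 1) x with h | h
    · have h' : k ≤ x := by omega
      push_cast [Nat.cast_sub h']
      ring
    · rcases lt_or_eq_of_le (Nat.lt_succ_iff.mp h) with h' | h'
      · rw [Nat.descFactorial_eq_zero_iff_lt.2 h']; simp
      · simp [h']

private lemma genChoose_natCast (x k : ℕ) : genChoose (x : ℝ) k = (x.choose k : ℝ) := by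
  rw [genChoose, prod_range_sub_cast, Nat.descFactorial_eq_factorial_mul_choose]
  have : ((k.factorial : ℝ)) ≠ 0 := Nat.cast_ne_zero.2 k.factorial_ne_zero
  push_cast
  field_simp

private lemma tsum_exp (a : ℝ) : ∑' y : ℕ, a ^ y / (Nat.factorial y : ℝ) = Real.exp a := by
  rw [Real.exp_eq_exp_ℝ, NormedSpace.exp_eq_tsum_div]

private lemma summable_choose (a : ℝ) (N : ℕ) :
    Summable (fun x : ℕ => a ^ x / (Nat.factorial x : ℝ) * (x.choose N : ℝ)) ∧
    ∑' x : ℕ, a ^ x / (Nat.factorial x : ℝ) * (x.choose N : ℝ)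
      = a ^ N / (Nat.factorial N : ℝ) * Real.exp a := by
  set f : ℕ → ℝ := fun x => a ^ x / (Nat.factorial x : ℝ) * (x.choose N : ℝ) with hf
  have hinj : Function.Injective (fun y : ℕ => y + N) := fun p q h => by
    simpa using h
  have hzero : ∀ x ∉ Set.range (fun y : ℕ => y + N), f x = 0 := by
    intro x hx
    have hxN : x < N := by
      by_contra h
      exact hx ⟨x - N, by simp; omega⟩
    simp [hf, Nat.choose_eq_zero_of_lt hxN]
  have hcomp : (f ∘ fun y : ℕ => y + N) = fun y : ℕ =>
      a ^ N / (Nat.factorial N : ℝ) * (a ^ y / (Nat.factorial y : ℝ)) := by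
    funext y
    have h1 : ((y + N).choose N : ℝ)
        = ((y + N).factorial : ℝ) / ((N.factorial : ℝ) * (y.factorial : ℝ)) := by
      rw [Nat.cast_choose ℝ (show N ≤ y + N by omega)]
      rw [Nat.add_sub_cancel]
    have hy : (y.factorial : ℝ) ≠ 0 := Nat.cast_ne_zero.2 y.factorial_ne_zero
    have hN : (N.factorial : ℝ) ≠ 0 := Nat.cast_ne_zero.2 N.factorial_ne_zero
    have hyN : (((y + N).factorial : ℕ) : ℝ) ≠ 0 := Nat.cast_ne_zero.2 (y + N).factorial_ne_zero
    simp only [Function.comp, hf, h1, pow_add]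
    field_simp
  have hs : Summable (f ∘ fun y : ℕ => y + N) := by
    rw [hcomp]
    exact (Real.summable_pow_div_factorial a).mul_left _
  have hsf : Summable f := (hinj.summable_iff hzero).1 hs
  refine ⟨hsf, ?_⟩
  have hsupp : Function.support f ⊆ Set.range (fun y : ℕ => y + N) := by
    intro x hx
    by_contra h
    exact hx (hzero x h)
  calc ∑' x : ℕ, f x = ∑' y : ℕ, f (y + N) := (hinj.tsum_eq hsupp).symm
    _ = ∑' y : ℕ, a ^ N / (Nat.factorial N : ℝ) * (a ^ y / (Nat.factorial y : ℝ)) := by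
        rw [← hcomp]; rfl
    _ = a ^ N / (Nat.factorial N : ℝ) * Real.exp a := by
        rw [tsum_mul_left, tsum_exp]

private lemma summable_choose2 (a : ℝ) (j k : ℕ) :
    Summable (fun x : ℕ => a ^ x / (Nat.factorial x : ℝ) * ((x.choose j : ℝ) * (x.choose k : ℝ))) ∧
    ∑' x : ℕ, a ^ x / (Nat.factorial x : ℝ) * ((x.choose j : ℝ) * (x.choose k : ℝ))
      = Real.exp a * (a ^ j / (Nat.factorial j : ℝ)) *
        ∑ p ∈ Finset.range (k + 1),
          (j.choose p : ℝ) * (a ^ (k - p) / (Nat.factorial (k - p) : ℝ)) := by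
  set f : ℕ → ℝ := fun x => a ^ x / (Nat.factorial x : ℝ) * ((x.choose j : ℝ) * (x.choose k : ℝ))
    with hf
  have hinj : Function.Injective (fun y : ℕ => y + j) := fun p q h => by simpa using h
  have hzero : ∀ x ∉ Set.range (fun y : ℕ => y + j), f x = 0 := by
    intro x hx
    have hxj : x < j := by
      by_contra h
      exact hx ⟨x - j, by simp; omega⟩
    simp [hf, Nat.choose_eq_zero_of_lt hxj]
  have hcomp : (f ∘ fun y : ℕ => y + j) = fun y : ℕ =>
      ∑ pq ∈ Finset.HasAntidiagonal.antidiagonal k,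
        (a ^ j / (Nat.factorial j : ℝ) * (j.choose pq.1 : ℝ)) *
          (a ^ y / (Nat.factorial y : ℝ) * (y.choose pq.2 : ℝ)) := by
    funext y
    have hvdm : ((y + j).choose k : ℝ)
        = ∑ pq ∈ Finset.HasAntidiagonal.antidiagonal k, (j.choose pq.1 : ℝ) * (y.choose pq.2 : ℝ) := by
      rw [show y + j = j + y by omega, Nat.add_choose_eq]
      push_cast
      rfl
    have h1 : ((y + j).choose j : ℝ)
        = ((y + j).factorial : ℝ) / ((j.factorial : ℝ) * (y.factorial : ℝ)) := by
      rw [Nat.cast_choose ℝ (show j ≤ y + j by omega), Nat.add_sub_cancel]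
    have hy : (y.factorial : ℝ) ≠ 0 := Nat.cast_ne_zero.2 y.factorial_ne_zero
    have hj : (j.factorial : ℝ) ≠ 0 := Nat.cast_ne_zero.2 j.factorial_ne_zero
    have hyj : (((y + j).factorial : ℕ) : ℝ) ≠ 0 := Nat.cast_ne_zero.2 (y + j).factorial_ne_zero
    simp only [Function.comp, hf, h1, hvdm, pow_add, Finset.mul_sum, Finset.sum_mul]
    refine Finset.sum_congr rfl fun pq _ => ?_
    field_simp
  have hsum_each : ∀ pq : ℕ × ℕ, Summable (fun y : ℕ =>
      (a ^ j / (Nat.factorial j : ℝ) * (j.choose pq.1 : ℝ)) *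
        (a ^ y / (Nat.factorial y : ℝ) * (y.choose pq.2 : ℝ))) := fun pq =>
    ((summable_choose a pq.2).1).mul_left _
  have hs : Summable (f ∘ fun y : ℕ => y + j) := by
    rw [hcomp]
    exact summable_sum fun pq _ => hsum_each pq
  have hsf : Summable f := (hinj.summable_iff hzero).1 hs
  refine ⟨hsf, ?_⟩
  have hsupp : Function.support f ⊆ Set.range (fun y : ℕ => y + j) := by
    intro x hx
    by_contra h
    exact hx (hzero x h)
  calc ∑' x : ℕ, f x = ∑' y : ℕ, f (y + j) := (hinj.tsum_eq hsupp).symm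
    _ = ∑' y : ℕ, ∑ pq ∈ Finset.HasAntidiagonal.antidiagonal k,
        (a ^ j / (Nat.factorial j : ℝ) * (j.choose pq.1 : ℝ)) *
          (a ^ y / (Nat.factorial y : ℝ) * (y.choose pq.2 : ℝ)) := by rw [← hcomp]; rfl
    _ = ∑ pq ∈ Finset.HasAntidiagonal.antidiagonal k, ∑' y : ℕ,
        (a ^ j / (Nat.factorial j : ℝ) * (j.choose pq.1 : ℝ)) *
          (a ^ y / (Nat.factorial y : ℝ) * (y.choose pq.2 : ℝ)) :=
        Summable.tsum_finsetSum fun pq _ => hsum_each pq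
    _ = ∑ pq ∈ Finset.HasAntidiagonal.antidiagonal k,
        (a ^ j / (Nat.factorial j : ℝ) * (j.choose pq.1 : ℝ)) *
          (a ^ pq.2 / (Nat.factorial pq.2 : ℝ) * Real.exp a) := by
        refine Finset.sum_congr rfl fun pq _ => ?_
        rw [tsum_mul_left, (summable_choose a pq.2).2]
    _ = Real.exp a * (a ^ j / (Nat.factorial j : ℝ)) *
        ∑ p ∈ Finset.range (k + 1),
          (j.choose p : ℝ) * (a ^ (k - p) / (Nat.factorial (k - p) : ℝ)) := by
        rw [Finset.Nat.sum_antidiagonal_eq_sum_range_succ_mk, Finset.mul_sum]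
        refine Finset.sum_congr rfl fun p _ => ?_
        ring

private lemma collapse (a : ℝ) (s : ℕ) :
    ∑ t ∈ Finset.range (s + 1),
      (-a) ^ (s - t) * a ^ t / ((Nat.factorial (s - t) : ℝ) * (Nat.factorial t : ℝ))
      = if s = 0 then 1 else 0 := by
  have hs : (s.factorial : ℝ) ≠ 0 := Nat.cast_ne_zero.2 s.factorial_ne_zero
  have key : ∀ t ∈ Finset.range (s + 1),
      (-a) ^ (s - t) * a ^ t / ((Nat.factorial (s - t) : ℝ) * (Nat.factorial t : ℝ))
        = a ^ t * (-a) ^ (s - t) * (s.choose t : ℝ) / (s.factorial : ℝ) := by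
    intro t ht
    have htle : t ≤ s := by simpa [Nat.lt_succ_iff] using ht
    rw [Nat.cast_choose ℝ htle]
    have h1 : (t.factorial : ℝ) ≠ 0 := Nat.cast_ne_zero.2 t.factorial_ne_zero
    have h2 : ((s - t).factorial : ℝ) ≠ 0 := Nat.cast_ne_zero.2 (s - t).factorial_ne_zero
    field_simp
  rw [Finset.sum_congr rfl key, ← Finset.sum_div, ← add_pow a (-a) s]
  simp only [add_neg_cancel]
  rcases Nat.eq_zero_or_pos s with h | h
  · simp [h]
  · rw [zero_pow (by omega), if_neg (by omega), zero_div]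

private lemma inner_alg (a : ℝ) (n j : ℕ) :
    ∑ k ∈ Finset.range (n + 1), ((-a) ^ (n - k) / (Nat.factorial (n - k) : ℝ)) *
      ∑ p ∈ Finset.range (k + 1),
        (j.choose p : ℝ) * (a ^ (k - p) / (Nat.factorial (k - p) : ℝ))
      = (j.choose n : ℝ) := by
  have step1 : ∀ k, ((-a) ^ (n - k) / (Nat.factorial (n - k) : ℝ)) *
      ∑ p ∈ Finset.range (k + 1),
        (j.choose p : ℝ) * (a ^ (k - p) / (Nat.factorial (k - p) : ℝ))
      = ∑ p ∈ Finset.range (k + 1), (j.choose p : ℝ) *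
        ((-a) ^ (n - k) * a ^ (k - p) / ((Nat.factorial (n - k) : ℝ) * (Nat.factorial (k - p) : ℝ))) := by
    intro k
    rw [Finset.mul_sum]
    refine Finset.sum_congr rfl fun p _ => ?_
    field_simp
  simp only [step1]
  have hswap : ∑ k ∈ Finset.range (n + 1), ∑ p ∈ Finset.range (k + 1), (j.choose p : ℝ) *
      ((-a) ^ (n - k) * a ^ (k - p) / ((Nat.factorial (n - k) : ℝ) * (Nat.factorial (k - p) : ℝ)))
      = ∑ p ∈ Finset.range (n + 1), ∑ k ∈ Finset.Ico p (n + 1), (j.choose p : ℝ) *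
      ((-a) ^ (n - k) * a ^ (k - p) / ((Nat.factorial (n - k) : ℝ) * (Nat.factorial (k - p) : ℝ))) := by
    simp only [Finset.range_eq_Ico]
    rw [← Finset.sum_Ico_Ico_comm 0 (n + 1) (fun p k => (j.choose p : ℝ) *
      ((-a) ^ (n - k) * a ^ (k - p) / ((Nat.factorial (n - k) : ℝ) * (Nat.factorial (k - p) : ℝ))))]
  rw [hswap]
  have step2 : ∀ p ∈ Finset.range (n + 1),
      ∑ k ∈ Finset.Ico p (n + 1), (j.choose p : ℝ) *
        ((-a) ^ (n - k) * a ^ (k - p) / ((Nat.factorial (n - k) : ℝ) * (Nat.factorial (k - p) : ℝ)))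
      = (j.choose p : ℝ) * (if p = n then 1 else 0) := by
    intro p hp
    have hpn : p ≤ n := by simpa [Nat.lt_succ_iff] using hp
    rw [Finset.sum_Ico_eq_sum_range]
    have hlen : n + 1 - p = (n - p) + 1 := by omega
    rw [hlen, ← Finset.mul_sum]
    congr 1
    have : ∀ t, (-a) ^ (n - (p + t)) * a ^ ((p + t) - p) /
        ((Nat.factorial (n - (p + t)) : ℝ) * (Nat.factorial ((p + t) - p) : ℝ))
        = (-a) ^ ((n - p) - t) * a ^ t /
        ((Nat.factorial ((n - p) - t) : ℝ) * (Nat.factorial t : ℝ)) := by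
      intro t
      have e1 : n - (p + t) = n - p - t := by omega
      have e2 : p + t - p = t := by omega
      rw [e1, e2]
    simp only [this]
    rw [collapse a (n - p)]
    by_cases h : p = n
    · simp [h]
    · rw [if_neg (by omega), if_neg h]
  rw [Finset.sum_congr rfl step2]
  simp only [mul_ite, mul_one, mul_zero]
  rw [Finset.sum_ite_eq' (Finset.range (n + 1)) n (fun p => (j.choose p : ℝ))]
  simp

private lemma key_alg (a : ℝ) (m n : ℕ) :
    ∑ j ∈ Finset.range (m + 1), ∑ k ∈ Finset.range (n + 1),
      ((-a) ^ (m - j) / (Nat.factorial (m - j) : ℝ)) *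
        ((-a) ^ (n - k) / (Nat.factorial (n - k) : ℝ)) *
        (a ^ j / (Nat.factorial j : ℝ) * ∑ p ∈ Finset.range (k + 1),
          (j.choose p : ℝ) * (a ^ (k - p) / (Nat.factorial (k - p) : ℝ)))
      = a ^ n / (Nat.factorial n : ℝ) * (if m = n then 1 else 0) := by
  have h1 : ∀ j, ∑ k ∈ Finset.range (n + 1),
      ((-a) ^ (m - j) / (Nat.factorial (m - j) : ℝ)) *
        ((-a) ^ (n - k) / (Nat.factorial (n - k) : ℝ)) *
        (a ^ j / (Nat.factorial j : ℝ) * ∑ p ∈ Finset.range (k + 1),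
          (j.choose p : ℝ) * (a ^ (k - p) / (Nat.factorial (k - p) : ℝ)))
      = ((-a) ^ (m - j) / (Nat.factorial (m - j) : ℝ)) * (a ^ j / (Nat.factorial j : ℝ)) *
        (j.choose n : ℝ) := by
    intro j
    calc ∑ k ∈ Finset.range (n + 1),
        ((-a) ^ (m - j) / (Nat.factorial (m - j) : ℝ)) *
          ((-a) ^ (n - k) / (Nat.factorial (n - k) : ℝ)) *
          (a ^ j / (Nat.factorial j : ℝ) * ∑ p ∈ Finset.range (k + 1),
            (j.choose p : ℝ) * (a ^ (k - p) / (Nat.factorial (k - p) : ℝ)))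
        = ((-a) ^ (m - j) / (Nat.factorial (m - j) : ℝ)) * (a ^ j / (Nat.factorial j : ℝ)) *
          ∑ k ∈ Finset.range (n + 1), ((-a) ^ (n - k) / (Nat.factorial (n - k) : ℝ)) *
            ∑ p ∈ Finset.range (k + 1),
              (j.choose p : ℝ) * (a ^ (k - p) / (Nat.factorial (k - p) : ℝ)) := by
          rw [Finset.mul_sum]
          exact Finset.sum_congr rfl fun k _ => by ring
      _ = ((-a) ^ (m - j) / (Nat.factorial (m - j) : ℝ)) * (a ^ j / (Nat.factorial j : ℝ)) *
          (j.choose n : ℝ) := by rw [inner_alg]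
  simp only [h1]
  rcases lt_or_ge m n with hmn | hnm
  · rw [Finset.sum_eq_zero, if_neg (by omega), mul_zero]
    intro j hj
    have : j < n := by simp only [Finset.mem_range] at hj; omega
    simp [Nat.choose_eq_zero_of_lt this]
  · have hsub : Finset.Ico n (m + 1) ⊆ Finset.range (m + 1) := by
      intro x hx
      simp only [Finset.mem_Ico] at hx
      simp only [Finset.mem_range]
      omega
    rw [← Finset.sum_subset hsub (fun j hj hj' => by
      have : j < n := by
        simp only [Finset.mem_range] at hj
        simp only [Finset.mem_Ico] at hj'
        omega
      simp [Nat.choose_eq_zero_of_lt this])]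
    rw [Finset.sum_Ico_eq_sum_range]
    have hlen : m + 1 - n = (m - n) + 1 := by omega
    rw [hlen]
    have hterm : ∀ t ∈ Finset.range ((m - n) + 1),
        ((-a) ^ (m - (n + t)) / (Nat.factorial (m - (n + t)) : ℝ)) *
          (a ^ (n + t) / (Nat.factorial (n + t) : ℝ)) * ((n + t).choose n : ℝ)
        = (a ^ n / (Nat.factorial n : ℝ)) *
          ((-a) ^ ((m - n) - t) * a ^ t /
            ((Nat.factorial ((m - n) - t) : ℝ) * (Nat.factorial t : ℝ))) := by
      intro t ht
      have e1 : m - (n + t) = m - n - t := by omega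
      have e2 : n + t - n = t := by omega
      rw [e1, Nat.cast_choose ℝ (show n ≤ n + t by omega), e2, pow_add]
      have h1 : (Nat.factorial n : ℝ) ≠ 0 := Nat.cast_ne_zero.2 n.factorial_ne_zero
      have h2 : (Nat.factorial t : ℝ) ≠ 0 := Nat.cast_ne_zero.2 t.factorial_ne_zero
      have h3 : (Nat.factorial (n + t) : ℝ) ≠ 0 := Nat.cast_ne_zero.2 (n + t).factorial_ne_zero
      have h4 : (Nat.factorial (m - n - t) : ℝ) ≠ 0 :=
        Nat.cast_ne_zero.2 (m - n - t).factorial_ne_zero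
      field_simp
    rw [Finset.sum_congr rfl hterm, ← Finset.mul_sum, collapse a (m - n)]
    congr 1
    by_cases h : m = n
    · simp [h]
    · rw [if_neg (by omega), if_neg h]

theorem charlier_orthogonal (a : ℝ) (ha : 0 < a) (m n : ℕ) :
    Summable (fun x : ℕ => Real.exp (-a) * a ^ x / (Nat.factorial x : ℝ) *
      (charlier a m x * charlier a n x)) ∧
    (∑' x : ℕ, Real.exp (-a) * a ^ x / (Nat.factorial x : ℝ) *
      (charlier a m x * charlier a n x))
      = a ^ n / (Nat.factorial n : ℝ) * (if m = n then 1 else 0) := by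
  classical
  set s : Finset (ℕ × ℕ) := Finset.range (m + 1) ×ˢ Finset.range (n + 1) with hs
  set F : ℕ × ℕ → ℕ → ℝ := fun jk x =>
    ((-a) ^ (m - jk.1) / (Nat.factorial (m - jk.1) : ℝ)) *
      ((-a) ^ (n - jk.2) / (Nat.factorial (n - jk.2) : ℝ)) * Real.exp (-a) *
      (a ^ x / (Nat.factorial x : ℝ) * ((x.choose jk.1 : ℝ) * (x.choose jk.2 : ℝ))) with hF
  have hexpand : (fun x : ℕ => Real.exp (-a) * a ^ x / (Nat.factorial x : ℝ) *
      (charlier a m x * charlier a n x)) = fun x : ℕ => ∑ jk ∈ s, F jk x := by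
    funext x
    have hm : charlier a m (x : ℝ) = ∑ j ∈ Finset.range (m + 1),
        (x.choose j : ℝ) * (-a) ^ (m - j) / (Nat.factorial (m - j) : ℝ) := by
      simp only [charlier, genChoose_natCast]
    have hn : charlier a n (x : ℝ) = ∑ k ∈ Finset.range (n + 1),
        (x.choose k : ℝ) * (-a) ^ (n - k) / (Nat.factorial (n - k) : ℝ) := by
      simp only [charlier, genChoose_natCast]
    rw [hm, hn, Finset.sum_mul_sum, hs, Finset.sum_product, Finset.mul_sum]
    refine Finset.sum_congr rfl fun j _ => ?_
    rw [Finset.mul_sum]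
    refine Finset.sum_congr rfl fun k _ => ?_
    simp only [hF]
    ring
  have hsummable_each : ∀ jk : ℕ × ℕ, Summable (F jk) := by
    intro jk
    exact ((summable_choose2 a jk.1 jk.2).1).mul_left _
  constructor
  · rw [hexpand]
    exact summable_sum fun jk _ => hsummable_each jk
  · rw [hexpand, Summable.tsum_finsetSum fun jk _ => hsummable_each jk]
    have hE : Real.exp (-a) * Real.exp a = 1 := by
      rw [← Real.exp_add, neg_add_cancel, Real.exp_zero]
    have htsum_each : ∀ jk : ℕ × ℕ, ∑' x : ℕ, F jk x
        = ((-a) ^ (m - jk.1) / (Nat.factorial (m - jk.1) : ℝ)) *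
            ((-a) ^ (n - jk.2) / (Nat.factorial (n - jk.2) : ℝ)) *
            (a ^ jk.1 / (Nat.factorial jk.1 : ℝ) * ∑ p ∈ Finset.range (jk.2 + 1),
              (jk.1.choose p : ℝ) * (a ^ (jk.2 - p) / (Nat.factorial (jk.2 - p) : ℝ))) := by
      intro jk
      simp only [hF]
      rw [tsum_mul_left, (summable_choose2 a jk.1 jk.2).2]
      linear_combination (((-a) ^ (m - jk.1) / (Nat.factorial (m - jk.1) : ℝ)) *
        ((-a) ^ (n - jk.2) / (Nat.factorial (n - jk.2) : ℝ)) *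
        (a ^ jk.1 / (Nat.factorial jk.1 : ℝ)) * (∑ p ∈ Finset.range (jk.2 + 1),
          (jk.1.choose p : ℝ) * (a ^ (jk.2 - p) / (Nat.factorial (jk.2 - p) : ℝ)))) * hE
    rw [Finset.sum_congr rfl fun jk _ => htsum_each jk]
    rw [hs, Finset.sum_product]
    exact key_alg a m n
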